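/- Let F, G : D → D' be exact functors between triangulated categories, with F fully faithful and admitting both adjoints, so that the essential image 𝒜 of F is an admissible (left and right admissible) triangulated subcategory of D'. Let Ω be a spanning class of D. If F(ω) ≅ G(ω) for every ω ∈ Ω and G has a right adjoint R, then the essential image of G is contained in 𝒜; i.e., for any M ∈ 𝒜^⊥ := {M : Hom(A, M[i]) = 0 ∀ A ∈ 𝒜, i ∈ ℤ}, one has R(M) = 0 and hence Hom(G(X), M[i]) = 0 for all X and i. -/
import Mathlib


open CategoryTheory CategoryTheory.Limits CategoryTheory.Pretriangulated

/-- Let `F, G : D ⥤ D'` be exact functors between triangulated categories with `F` fully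
faithful admitting both adjoints (so its essential image is admissible), let `Ω` be a
spanning class of `D`, and let `R` be a right adjoint of `G`. If `F ω ≅ G ω` for every
`ω ∈ Ω`, then the essential image of `G` is contained in that of `F`: for any `M` right
orthogonal to the essential image of `F` (i.e. `Hom(F A, M[i]) = 0` for all `A, i`), one
has `R M = 0` and hence `Hom(G X, M[i]) = 0` for all `X, i`. -/
theorem essImage_contained_of_agree_on_spanning
    (D : Type*) [Category D] [Preadditive D] [HasZeroObject D]
    [HasShift D ℤ] [∀ n : ℤ, (shiftFunctor D n).Additive] [Pretriangulated D]
    (D' : Type*) [Category D'] [Preadditive D'] [HasZeroObject D']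
    [HasShift D' ℤ] [∀ n : ℤ, (shiftFunctor D' n).Additive] [Pretriangulated D']
    (F G : D ⥤ D') [F.CommShift ℤ] [F.IsTriangulated] [F.Full] [F.Faithful]
    [G.CommShift ℤ] [G.IsTriangulated]
    (FL FR : D' ⥤ D) (adjFL : FL ⊣ F) (adjFR : F ⊣ FR)
    (R : D' ⥤ D) (adjR : G ⊣ R)
    (Ω : Set D)
    (hspan₁ : ∀ K : D, (∀ ω ∈ Ω, ∀ i : ℤ, ∀ f : ω ⟶ K⟦i⟧, f = 0) → IsZero K)
    (hspan₂ : ∀ K : D, (∀ ω ∈ Ω, ∀ i : ℤ, ∀ f : K ⟶ ω⟦i⟧, f = 0) → IsZero K)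
    (hagree : ∀ ω ∈ Ω, Nonempty (F.obj ω ≅ G.obj ω))
    (M : D') (hM : ∀ (A : D) (i : ℤ) (f : F.obj A ⟶ M⟦i⟧), f = 0) :
    IsZero (R.obj M) ∧ ∀ (X : D) (i : ℤ) (g : G.obj X ⟶ M⟦i⟧), g = 0 := by
  -- Every morphism from a shift of `M`'s orthogonal data out of `G` of anything in `Ω`-shifts
  -- vanishes; we first prove the key claim for all shifted copies of `M`.
  have key : ∀ (N : D'), (∀ (A : D) (i : ℤ) (f : F.obj A ⟶ N⟦i⟧), f = 0) →
      IsZero (R.obj N) := by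
    intro N hN
    -- morphisms `F A ⟶ N` vanish
    have hN0 : ∀ (A : D) (f : F.obj A ⟶ N), f = 0 := by
      intro A f
      have h := hN A 0 (f ≫ (shiftFunctorZero D' ℤ).inv.app N)
      have := h =≫ (shiftFunctorZero D' ℤ).hom.app N
      simpa using this
    -- hence morphisms `G A ⟶ N` vanish for `A` a shift of an element of `Ω`
    have hGN : ∀ ω ∈ Ω, ∀ (n : ℤ) (f : G.obj (ω⟦n⟧) ⟶ N), f = 0 := by
      intro ω hω n f
      obtain ⟨e⟩ := hagree ω hω
      set e' : F.obj (ω⟦n⟧) ≅ G.obj (ω⟦n⟧) :=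
        (F.commShiftIso n).app ω ≪≫ (shiftFunctor D' n).mapIso e ≪≫
          ((G.commShiftIso n).app ω).symm with he'
      have h0 : e'.hom ≫ f = 0 := hN0 (ω⟦n⟧) (e'.hom ≫ f)
      calc f = e'.inv ≫ (e'.hom ≫ f) := by simp
        _ = 0 := by rw [h0, comp_zero]
    apply hspan₁
    intro ω hω i f
    -- transport `f : ω ⟶ (R N)⟦i⟧` to `g : ω⟦-i⟧ ⟶ R N`
    set E : (ω⟦-i⟧)⟦i⟧ ≅ ω := (shiftFunctorCompIsoId D (-i) i (by ring)).app ω with hE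
    obtain ⟨g, hg⟩ := (shiftFunctor D i).map_surjective (E.hom ≫ f)
    have hg0 : g = 0 := by
      have h1 : (adjR.homEquiv _ _).symm g = 0 := hGN ω hω (-i) _
      have h2 : (adjR.homEquiv (ω⟦-i⟧) N).symm 0 = 0 := by
        rw [Adjunction.homEquiv_symm_apply, G.map_zero, Limits.zero_comp]
      exact (adjR.homEquiv (ω⟦-i⟧) N).symm.injective (h1.trans h2.symm)
    have : E.hom ≫ f = 0 := by rw [← hg, hg0, Functor.map_zero]
    have h2 := congrArg (fun t => E.inv ≫ t) this
    simpa using h2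
  have h1 : IsZero (R.obj M) := by
    apply key
    exact hM
  refine ⟨h1, ?_⟩
  intro X i g
  have h2 : IsZero (R.obj (M⟦i⟧)) := by
    apply key
    intro A j f
    have := hM A (i + j) (f ≫ (shiftFunctorAdd' D' i j (i + j) rfl).inv.app M)
    have h := this =≫ (shiftFunctorAdd' D' i j (i + j) rfl).hom.app M
    simpa using h
  have h3 : adjR.homEquiv X (M⟦i⟧) g = 0 := h2.eq_zero_of_tgt _
  have h4 := congrArg (adjR.homEquiv X (M⟦i⟧)).symm h3
  rw [Equiv.symm_apply_apply] at h4
  rw [h4, Adjunction.homEquiv_symm_apply, G.map_zero, Limits.zero_comp]
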